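/- Suppose P solves the algebraic Riccati equation AᵀP + PA − P B R⁻¹ Bᵀ P + Q = 0 with R > 0 a scalar, Q positive semidefinite, P symmetric positive definite, and the closed-loop matrix A_c = A − B R⁻¹ Bᵀ P is such that all trajectories of ẋ = A_c x tend to 0. Then for the control u = −R⁻¹ Bᵀ P x along such a trajectory starting at x(0) = x₀, the cost ∫₀^∞ (xᵀQx + R u²) dt equals x₀ᵀ P x₀. -/

import Mathlib

open Matrix MeasureTheory

attribute [local instance] Matrix.linftyOpNormedRing Matrix.linftyOpNormedAlgebra

lemma quadform_hasDerivAt {n : ℕ} (P : Matrix (Fin n) (Fin n) ℝ)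
    {y : ℝ → Fin n → ℝ} {y' : Fin n → ℝ} {t : ℝ} (hy : HasDerivAt y y' t) :
    HasDerivAt (fun s => y s ⬝ᵥ (P *ᵥ y s))
      (y' ⬝ᵥ (P *ᵥ y t) + y t ⬝ᵥ (P *ᵥ y')) t := by
  have hyc : ∀ i, HasDerivAt (fun s => y s i) (y' i) t := fun i => hasDerivAt_pi.1 hy i
  simp only [dotProduct, Matrix.mulVec, Finset.sum_add_distrib.symm]
  refine HasDerivAt.congr_deriv (HasDerivAt.fun_sum fun i _ => ((hyc i).mul
    (HasDerivAt.fun_sum (fun j _ => ((hyc j).const_mul (P i j)))))) ?_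
  rfl

lemma my_vecMulVec_transpose {n : ℕ} (u v : Fin n → ℝ) :
    (vecMulVec u v)ᵀ = vecMulVec v u := by
  ext i j; simp [vecMulVec_apply, mul_comm]

lemma my_vecMulVec_mul {n : ℕ} (u v : Fin n → ℝ) (P : Matrix (Fin n) (Fin n) ℝ) :
    vecMulVec u v * P = vecMulVec u (v ᵥ* P) := by
  rw [vecMulVec_eq (Fin 1), vecMulVec_eq (Fin 1), Matrix.mul_assoc, ← Matrix.replicateRow_vecMul]

lemma my_mul_vecMulVec {n : ℕ} (u v : Fin n → ℝ) (P : Matrix (Fin n) (Fin n) ℝ) :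
    P * vecMulVec u v = vecMulVec (P *ᵥ u) v := by
  rw [vecMulVec_eq (Fin 1), vecMulVec_eq (Fin 1), ← Matrix.mul_assoc, ← Matrix.replicateCol_mulVec]

lemma my_vecMulVec_mulVec {n : ℕ} (u v w : Fin n → ℝ) :
    vecMulVec u v *ᵥ w = (v ⬝ᵥ w) • u := by
  ext i
  simp [vecMulVec_apply, Matrix.mulVec, dotProduct, Finset.mul_sum, mul_assoc,
    mul_comm, mul_left_comm]

lemma my_dp_swap {n : ℕ} (M : Matrix (Fin n) (Fin n) ℝ) (v w : Fin n → ℝ) :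
    (M *ᵥ v) ⬝ᵥ w = v ⬝ᵥ (Mᵀ *ᵥ w) := by
  rw [dotProduct_comm, Matrix.dotProduct_mulVec, ← Matrix.mulVec_transpose,
    dotProduct_comm]

theorem lqr_cost_eq_riccati_quadratic_form
    (n : ℕ) (A Q P : Matrix (Fin n) (Fin n) ℝ) (B : Fin n → ℝ) (R : ℝ)
    (hR : 0 < R) (hQ : Q.PosSemidef) (hP : P.PosDef)
    (hARE : Aᵀ * P + P * A - R⁻¹ • vecMulVec (P *ᵥ B) (B ᵥ* P) + Q = 0)
    (x₀ : Fin n → ℝ)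
    (Ac : Matrix (Fin n) (Fin n) ℝ)
    (hAc : Ac = A - R⁻¹ • vecMulVec B (B ᵥ* P))
    (x : ℝ → Fin n → ℝ)
    (hx : ∀ t, x t = NormedSpace.exp (t • Ac) *ᵥ x₀)
    (hstab : Filter.Tendsto x Filter.atTop (nhds 0))
    (u : ℝ → ℝ)
    (hu : ∀ t, u t = -R⁻¹ * (B ⬝ᵥ (P *ᵥ x t))) :
    ∫ t in Set.Ioi (0 : ℝ), (x t ⬝ᵥ (Q *ᵥ x t) + R * (u t) ^ 2) = x₀ ⬝ᵥ (P *ᵥ x₀) := by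
  have hPt : Pᵀ = P := by
    have := hP.isHermitian
    simpa [Matrix.IsHermitian, Matrix.conjTranspose_eq_transpose_of_trivial] using this
  have hBP : B ᵥ* P = P *ᵥ B := by
    rw [← Matrix.mulVec_transpose, hPt]
  -- derivative of the trajectory
  have hxd : ∀ t, HasDerivAt x (Ac *ᵥ x t) t := by
    intro t
    have hexp := hasDerivAt_exp_smul_const' (𝕂 := ℝ) Ac t
    let L : Matrix (Fin n) (Fin n) ℝ →ₗ[ℝ] (Fin n → ℝ) :=
      { toFun := fun M => M *ᵥ x₀
        map_add' := fun M N => Matrix.add_mulVec M N x₀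
        map_smul' := fun c M => Matrix.smul_mulVec c M x₀ }
    have hcomp := (L.toContinuousLinearMap.hasFDerivAt (x := NormedSpace.exp (t • Ac))
      ).comp_hasDerivAt t hexp
    have h1 : (fun s : ℝ => L.toContinuousLinearMap (NormedSpace.exp (s • Ac))) = x := by
      funext s; simp [L, LinearMap.toContinuousLinearMap, hx s]
    have h2 : L.toContinuousLinearMap (Ac * NormedSpace.exp (t • Ac)) = Ac *ᵥ x t := by
      simp [L, LinearMap.toContinuousLinearMap, hx t, Matrix.mulVec_mulVec]
    replace hcomp := hcomp.congr_deriv h2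
    exact hcomp.congr_of_eventuallyEq (Filter.Eventually.of_forall fun s => by
      simp [Function.comp, L, LinearMap.toContinuousLinearMap, hx s]; rfl)
  set S : Matrix (Fin n) (Fin n) ℝ := vecMulVec (P *ᵥ B) (B ᵥ* P) with hS
  -- closed loop Lyapunov identity
  have hkey : Acᵀ * P + P * Ac = -(Q + R⁻¹ • S) := by
    have h1 : Acᵀ = Aᵀ - R⁻¹ • vecMulVec (B ᵥ* P) B := by
      rw [hAc]; simp [Matrix.transpose_smul, my_vecMulVec_transpose]
    have h2 : vecMulVec (B ᵥ* P) B * P = S := by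
      rw [my_vecMulVec_mul, hS, hBP]
    have h3 : P * vecMulVec B (B ᵥ* P) = S := by
      rw [my_mul_vecMulVec, hS]
    have hARE' : Aᵀ * P + P * A = R⁻¹ • S - Q := by
      have := hARE
      rw [hS]
      linear_combination (norm := module) this
    rw [h1, hAc, Matrix.sub_mul, Matrix.mul_sub, Matrix.smul_mul, Matrix.mul_smul, h2, h3]
    have : Aᵀ * P - R⁻¹ • S + (P * A - R⁻¹ • S) =
        (Aᵀ * P + P * A) - (2 * R⁻¹) • S := by module
    rw [this, hARE']
    module
  -- pointwise derivative identity
  have hderiv : ∀ t, HasDerivAt (fun s => -(x s ⬝ᵥ (P *ᵥ x s)))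
      (x t ⬝ᵥ (Q *ᵥ x t) + R * (u t) ^ 2) t := by
    intro t
    have h := (quadform_hasDerivAt P (hxd t)).neg
    have heq : -((Ac *ᵥ x t) ⬝ᵥ (P *ᵥ x t) + x t ⬝ᵥ (P *ᵥ (Ac *ᵥ x t)))
        = x t ⬝ᵥ (Q *ᵥ x t) + R * (u t) ^ 2 := by
      set v := x t with hv
      have e1 : (Ac *ᵥ v) ⬝ᵥ (P *ᵥ v) + v ⬝ᵥ (P *ᵥ (Ac *ᵥ v))
          = v ⬝ᵥ ((Acᵀ * P + P * Ac) *ᵥ v) := by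
        rw [my_dp_swap, Matrix.add_mulVec, dotProduct_add,
          Matrix.mulVec_mulVec, Matrix.mulVec_mulVec]
      have e2 : v ⬝ᵥ (S *ᵥ v) = (B ⬝ᵥ (P *ᵥ v)) ^ 2 := by
        rw [hS, my_vecMulVec_mulVec, dotProduct_smul]
        have c1 : (B ᵥ* P) ⬝ᵥ v = B ⬝ᵥ (P *ᵥ v) := (Matrix.dotProduct_mulVec B P v).symm
        have c2 : v ⬝ᵥ (P *ᵥ B) = B ⬝ᵥ (P *ᵥ v) := by
          rw [Matrix.dotProduct_mulVec, ← Matrix.mulVec_transpose, hPt,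
            dotProduct_comm]
        rw [c1, c2, smul_eq_mul]; ring
      rw [e1, hkey, Matrix.neg_mulVec, dotProduct_neg, neg_neg,
        Matrix.add_mulVec, dotProduct_add, Matrix.smul_mulVec,
        dotProduct_smul, e2, hu t, smul_eq_mul]
      field_simp
      ring
    rw [heq] at h
    exact h
  have hcontQF : Continuous fun v : Fin n → ℝ => -(v ⬝ᵥ (P *ᵥ v)) := by
    simp only [dotProduct, Matrix.mulVec]
    fun_prop
  have htend : Filter.Tendsto (fun s => -(x s ⬝ᵥ (P *ᵥ x s))) Filter.atTop (nhds 0) := by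
    have := (hcontQF.tendsto 0).comp hstab
    simpa [Function.comp_def] using this
  have hnonneg : ∀ t ∈ Set.Ioi (0:ℝ), 0 ≤ x t ⬝ᵥ (Q *ᵥ x t) + R * (u t) ^ 2 := by
    intro t _
    have h1 : 0 ≤ x t ⬝ᵥ (Q *ᵥ x t) := by
      have := hQ.dotProduct_mulVec_nonneg (x t)
      simpa using this
    have h2 : 0 ≤ R * (u t) ^ 2 := mul_nonneg hR.le (sq_nonneg _)
    linarith
  have hint := integral_Ioi_of_hasDerivAt_of_nonneg
    (g := fun s => -(x s ⬝ᵥ (P *ᵥ x s)))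
    (g' := fun t => x t ⬝ᵥ (Q *ᵥ x t) + R * (u t) ^ 2)
    ((hderiv 0).continuousAt.continuousWithinAt)
    (fun t _ => hderiv t) hnonneg htend
  rw [hint]
  have hx0 : x 0 = x₀ := by
    rw [hx 0]; simp [NormedSpace.exp_zero]
  simp [hx0]
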